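/- Let p₁, p₂ ∈ ℝ² and ρ₁ ≥ ρ₂ > 0 be such that there exists a point s₀ with dist(s₀, pᵢ) ≤ ρᵢ for i = 1,2 where the ρᵢ come from ρᵢ = 1/√(E({s₁,s₂}, pᵢ)) for stations s₁, s₂ with E(s₀,pᵢ) ≥ E({s₁,s₂},pᵢ). Then the boundary circles of the balls B(p₁,ρ₁) and B(p₂,ρ₂) intersect; i.e., |ρ₁ − ρ₂| ≤ dist(p₁,p₂) ≤ ρ₁ + ρ₂. -/

import Mathlib

set_option maxHeartbeats 800000 in
private lemma key_ineq (u₁ u₂ v₁ v₂ d : ℝ) (hu₁ : 0 < u₁) (hu₂ : 0 < u₂)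
    (hv₁ : 0 < v₁) (hv₂ : 0 < v₂) (hd : 0 ≤ d)
    (htu : u₁ ≤ u₂ + d) (htv : v₁ ≤ v₂ + d) :
    (Real.sqrt (1/u₁^2 + 1/v₁^2))⁻¹ - (Real.sqrt (1/u₂^2 + 1/v₂^2))⁻¹ ≤ d := by
  set A₁ := Real.sqrt (1/u₁^2 + 1/v₁^2) with hA₁
  set A₂ := Real.sqrt (1/u₂^2 + 1/v₂^2) with hA₂
  have hA₁pos : 0 < A₁ := Real.sqrt_pos.mpr (by positivity)
  have hA₂pos : 0 < A₂ := Real.sqrt_pos.mpr (by positivity)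
  have sA₁ : A₁^2 = 1/u₁^2 + 1/v₁^2 := Real.sq_sqrt (by positivity)
  have sA₂ : A₂^2 = 1/u₂^2 + 1/v₂^2 := Real.sq_sqrt (by positivity)
  have sqrt_bnd : ∀ x y : ℝ, 0 < x → 0 < y →
      1/x ≤ Real.sqrt (1/x^2 + 1/y^2) := by
    intro x y hx hy
    rw [show (1:ℝ)/x = Real.sqrt ((1/x)^2) from (Real.sqrt_sq (by positivity)).symm]
    apply Real.sqrt_le_sqrt
    rw [div_pow, one_pow]
    have : (0:ℝ) < 1/y^2 := by positivity
    linarith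
  have hAu₂ : 1/u₂ ≤ A₂ := sqrt_bnd u₂ v₂ hu₂ hv₂
  have hAv₂ : 1/v₂ ≤ A₂ := by
    rw [hA₂, show (1:ℝ)/u₂^2 + 1/v₂^2 = 1/v₂^2 + 1/u₂^2 by ring]
    exact sqrt_bnd v₂ u₂ hv₂ hu₂
  have hAu₁ : 1/u₁ ≤ A₁ := sqrt_bnd u₁ v₁ hu₁ hv₁
  have hAv₁ : 1/v₁ ≤ A₁ := by
    rw [hA₁, show (1:ℝ)/u₁^2 + 1/v₁^2 = 1/v₁^2 + 1/u₁^2 by ring]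
    exact sqrt_bnd v₁ u₁ hv₁ hu₁
  have ha : 1/u₂^2 - 1/u₁^2 ≤ d/(u₁^2*u₂) + d/(u₁*u₂^2) := by
    have e1 : 1/u₂^2 - 1/u₁^2 = (u₁^2-u₂^2)/(u₁^2*u₂^2) := by
      rw [eq_div_iff (by positivity : (u₁^2*u₂^2) ≠ 0)]
      field_simp
    have e2 : d/(u₁^2*u₂) + d/(u₁*u₂^2) = (d*(u₁+u₂))/(u₁^2*u₂^2) := by
      field_simp
      ring
    rw [e1, e2, div_le_div_iff_of_pos_right (by positivity)]
    nlinarith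
  have hb : 1/v₂^2 - 1/v₁^2 ≤ d/(v₁^2*v₂) + d/(v₁*v₂^2) := by
    have e1 : 1/v₂^2 - 1/v₁^2 = (v₁^2-v₂^2)/(v₁^2*v₂^2) := by
      rw [eq_div_iff (by positivity : (v₁^2*v₂^2) ≠ 0)]
      field_simp
    have e2 : d/(v₁^2*v₂) + d/(v₁*v₂^2) = (d*(v₁+v₂))/(v₁^2*v₂^2) := by
      field_simp
      ring
    rw [e1, e2, div_le_div_iff_of_pos_right (by positivity)]
    nlinarith
  have hden1 : 1/(u₁^2*u₂) + 1/(v₁^2*v₂) ≤ A₁^2*A₂ := by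
    have h1 : (1/u₁^2)*(1/u₂) + (1/v₁^2)*(1/v₂) ≤ (1/u₁^2)*A₂ + (1/v₁^2)*A₂ := by
      gcongr <;> positivity
    calc 1/(u₁^2*u₂) + 1/(v₁^2*v₂) = (1/u₁^2)*(1/u₂) + (1/v₁^2)*(1/v₂) := by ring
      _ ≤ (1/u₁^2)*A₂ + (1/v₁^2)*A₂ := h1
      _ = A₁^2*A₂ := by rw [sA₁]; ring
  have hden2 : 1/(u₁*u₂^2) + 1/(v₁*v₂^2) ≤ A₁*A₂^2 := by
    have h1 : (1/u₂^2)*(1/u₁) + (1/v₂^2)*(1/v₁) ≤ (1/u₂^2)*A₁ + (1/v₂^2)*A₁ := by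
      gcongr <;> positivity
    calc 1/(u₁*u₂^2) + 1/(v₁*v₂^2) = (1/u₂^2)*(1/u₁) + (1/v₂^2)*(1/v₁) := by ring
      _ ≤ (1/u₂^2)*A₁ + (1/v₂^2)*A₁ := h1
      _ = A₁*A₂^2 := by rw [sA₂]; ring
  have t1 := mul_le_mul_of_nonneg_left hden1 hd
  have t2 := mul_le_mul_of_nonneg_left hden2 hd
  have e3 : d/(u₁^2*u₂) + d/(v₁^2*v₂) = d*(1/(u₁^2*u₂) + 1/(v₁^2*v₂)) := by ring
  have e4 : d/(u₁*u₂^2) + d/(v₁*v₂^2) = d*(1/(u₁*u₂^2) + 1/(v₁*v₂^2)) := by ring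
  have hmain : A₂^2 - A₁^2 ≤ d*(A₁^2*A₂) + d*(A₁*A₂^2) := by
    have h5 : A₂^2 - A₁^2 = (1/u₂^2 - 1/u₁^2) + (1/v₂^2 - 1/v₁^2) := by
      rw [sA₁, sA₂]; ring
    linarith
  have hfrac : A₁⁻¹ - A₂⁻¹ = (A₂^2 - A₁^2)/(A₁*A₂*(A₁+A₂)) := by
    field_simp
    ring
  rw [hfrac, div_le_iff₀ (by positivity)]
  nlinarith [hmain]

theorem stmt10 (p₁ p₂ s₀ s₁ s₂ : EuclideanSpace ℝ (Fin 2)) (hp : p₁ ≠ p₂)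
    (E : EuclideanSpace ℝ (Fin 2) → EuclideanSpace ℝ (Fin 2) → ℝ)
    (hE : ∀ s p, E s p = (dist s p ^ 2)⁻¹)
    (hne : s₁ ≠ p₁ ∧ s₁ ≠ p₂ ∧ s₂ ≠ p₁ ∧ s₂ ≠ p₂)
    (ρ₁ ρ₂ : ℝ)
    (hρ₁ : ρ₁ = (Real.sqrt (E s₁ p₁ + E s₂ p₁))⁻¹)
    (hρ₂ : ρ₂ = (Real.sqrt (E s₁ p₂ + E s₂ p₂))⁻¹)
    (hρ : ρ₂ ≤ ρ₁)
    (h1 : E s₁ p₁ + E s₂ p₁ ≤ E s₀ p₁) (h2 : E s₁ p₂ + E s₂ p₂ ≤ E s₀ p₂) :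
    |ρ₁ - ρ₂| ≤ dist p₁ p₂ ∧ dist p₁ p₂ ≤ ρ₁ + ρ₂ := by
  obtain ⟨h11, h12, h21, h22⟩ := hne
  have hu₁ : 0 < dist s₁ p₁ := dist_pos.mpr h11
  have hu₂ : 0 < dist s₁ p₂ := dist_pos.mpr h12
  have hv₁ : 0 < dist s₂ p₁ := dist_pos.mpr h21
  have hv₂ : 0 < dist s₂ p₂ := dist_pos.mpr h22
  have eE1 : E s₁ p₁ + E s₂ p₁ = 1/(dist s₁ p₁)^2 + 1/(dist s₂ p₁)^2 := by
    rw [hE, hE, one_div, one_div]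
  have eE2 : E s₁ p₂ + E s₂ p₂ = 1/(dist s₁ p₂)^2 + 1/(dist s₂ p₂)^2 := by
    rw [hE, hE, one_div, one_div]
  have hρ₁' : ρ₁ = (Real.sqrt (1/(dist s₁ p₁)^2 + 1/(dist s₂ p₁)^2))⁻¹ := by
    rw [hρ₁, eE1]
  have hρ₂' : ρ₂ = (Real.sqrt (1/(dist s₁ p₂)^2 + 1/(dist s₂ p₂)^2))⁻¹ := by
    rw [hρ₂, eE2]
  have hd : 0 ≤ dist p₁ p₂ := dist_nonneg
  have htu : dist s₁ p₁ ≤ dist s₁ p₂ + dist p₁ p₂ := by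
    calc dist s₁ p₁ ≤ dist s₁ p₂ + dist p₂ p₁ := dist_triangle _ _ _
      _ = dist s₁ p₂ + dist p₁ p₂ := by rw [dist_comm p₂ p₁]
  have htv : dist s₂ p₁ ≤ dist s₂ p₂ + dist p₁ p₂ := by
    calc dist s₂ p₁ ≤ dist s₂ p₂ + dist p₂ p₁ := dist_triangle _ _ _
      _ = dist s₂ p₂ + dist p₁ p₂ := by rw [dist_comm p₂ p₁]
  have hρ₁pos : 0 < ρ₁ := by
    rw [hρ₁']
    have : 0 < Real.sqrt (1/(dist s₁ p₁)^2 + 1/(dist s₂ p₁)^2) :=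
      Real.sqrt_pos.mpr (by positivity)
    positivity
  have hρ₂pos : 0 < ρ₂ := by
    rw [hρ₂']
    have : 0 < Real.sqrt (1/(dist s₁ p₂)^2 + 1/(dist s₂ p₂)^2) :=
      Real.sqrt_pos.mpr (by positivity)
    positivity
  constructor
  · rw [abs_of_nonneg (by linarith)]
    have := key_ineq (dist s₁ p₁) (dist s₁ p₂) (dist s₂ p₁) (dist s₂ p₂)
      (dist p₁ p₂) hu₁ hu₂ hv₁ hv₂ hd htu htv
    rw [← hρ₁', ← hρ₂'] at this
    linarith
  · have hball : ∀ (p : EuclideanSpace ℝ (Fin 2)) (ρ : ℝ), 0 < ρ →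
        (ρ^2)⁻¹ ≤ E s₀ p → dist s₀ p ≤ ρ := by
      intro p ρ hρpos hle
      rw [hE] at hle
      by_cases h : s₀ = p
      · simp only [h, dist_self]
        linarith
      · have hdpos : 0 < dist s₀ p := dist_pos.mpr h
        have hsq : dist s₀ p ^ 2 ≤ ρ^2 := by
          have h2 : (0:ℝ) < (dist s₀ p ^ 2)⁻¹ := by positivity
          have h3 := inv_anti₀ (by positivity : (0:ℝ) < (ρ^2)⁻¹) hle
          rw [inv_inv, inv_inv] at h3
          exact h3
        nlinarith
    have hb1 : dist s₀ p₁ ≤ ρ₁ := by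
      apply hball p₁ ρ₁ hρ₁pos
      have he : (ρ₁^2)⁻¹ = E s₁ p₁ + E s₂ p₁ := by
        rw [hρ₁, ← inv_pow, inv_inv, Real.sq_sqrt]
        rw [eE1]; positivity
      rw [he]; exact h1
    have hb2 : dist s₀ p₂ ≤ ρ₂ := by
      apply hball p₂ ρ₂ hρ₂pos
      have he : (ρ₂^2)⁻¹ = E s₁ p₂ + E s₂ p₂ := by
        rw [hρ₂, ← inv_pow, inv_inv, Real.sq_sqrt]
        rw [eE2]; positivity
      rw [he]; exact h2
    calc dist p₁ p₂ ≤ dist p₁ s₀ + dist s₀ p₂ := dist_triangle _ _ _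
      _ = dist s₀ p₁ + dist s₀ p₂ := by rw [dist_comm p₁ s₀]
      _ ≤ ρ₁ + ρ₂ := by linarith
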